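/- arXiv:1509.06459 — 5 statements merged into one kernel-verified Lean document; each statement's English description precedes it below -/
import Mathlib

section
/- Let g: ℝ → ℝ be differentiable with g' continuous and nonincreasing (as holds when g is concave). Fix θ ∈ ℝ^p, x ∈ ℝ^p, γ > 0, and a positive semidefinite matrix C. Set κ = g'(x^T θ) and a = x^T C x ≥ 0. Then the one-dimensional fixed point equation ξ = γ g'(x^T θ + ξ a) has a solution ξ* lying between 0 and γκ (i.e., ξ* ∈ [0, γκ] if κ ≥ 0 and ξ* ∈ [γκ, 0] if κ ≤ 0). -/
open Matrix

/-- Existence of a solution to the one-dimensional implicit-SGD fixed point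
equation, lying between 0 and γ·g'(xᵀθ). -/
theorem stmt_1 {p : ℕ} (g : ℝ → ℝ) (hg : Differentiable ℝ g)
    (hcont : Continuous (deriv g)) (hanti : Antitone (deriv g))
    (θ x : Fin p → ℝ) (γ : ℝ) (hγ : 0 < γ)
    (C : Matrix (Fin p) (Fin p) ℝ) (hC : C.PosSemidef) :
    ∃ ξ : ℝ, ξ = γ * deriv g (x ⬝ᵥ θ + ξ * (x ⬝ᵥ C.mulVec x)) ∧
      ξ ∈ Set.uIcc 0 (γ * deriv g (x ⬝ᵥ θ)) := by
  set t0 := x ⬝ᵥ θ with ht0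
  set a := x ⬝ᵥ C.mulVec x with ha_def
  have ha : 0 ≤ a := by simpa using hC.dotProduct_mulVec_nonneg x
  set k := γ * deriv g t0 with hk
  set F : ℝ → ℝ := fun ξ => γ * deriv g (t0 + ξ * a) - ξ with hF
  have hcontF : Continuous F := by
    apply Continuous.sub _ continuous_id
    exact continuous_const.mul (hcont.comp (by continuity))
  have hF0 : F 0 = k := by simp [hF, hk]
  have hmono : ∀ ⦃s t : ℝ⦄, s ≤ t → F t + t ≤ F s + s := by
    intro s t hst
    have h1 : t0 + s * a ≤ t0 + t * a := by nlinarith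
    have := hanti h1
    simp only [hF]
    nlinarith
  have key : (0 : ℝ) ∈ Set.uIcc (F 0) (F k) := by
    rcases le_or_gt 0 k with h | h
    · have h2 : F k + k ≤ F 0 + 0 := hmono h
      rw [hF0] at h2
      rw [Set.mem_uIcc]
      exact Or.inr ⟨by linarith, by rw [hF0]; exact h⟩
    · have h2 : F 0 + 0 ≤ F k + k := hmono h.le
      rw [hF0] at h2
      rw [Set.mem_uIcc]
      exact Or.inl ⟨by rw [hF0]; exact h.le, by linarith⟩
  obtain ⟨ξ, hξmem, hξ0⟩ := intermediate_value_uIcc (hcontF.continuousOn) key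
  refine ⟨ξ, by simp only [hF] at hξ0; linarith, ?_⟩
  simpa [hF0] using hξmem
end

section
/- Let h: ℝ → ℝ be differentiable with h' ≥ 0 (a GLM transfer function). For fixed x ∈ ℝ^p, y ∈ ℝ, γ > 0 and positive semidefinite C, the function F(ξ) = γ(y − h(x^T θ + ξ x^T C x)) is nonincreasing in ξ, and hence the map ξ ↦ F(ξ) has at most one fixed point whenever h' > 0 and x^T C x > 0; at least one fixed point exists between 0 and γ(y − h(x^T θ)) if h is continuous. -/
open Matrix

/-- For a GLM transfer function h with h' ≥ 0, the map
F(ξ) = γ(y − h(xᵀθ + ξ xᵀCx)) is nonincreasing; it has at most one fixed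
point when h' > 0 and xᵀCx > 0, and at least one fixed point between 0 and
γ(y − h(xᵀθ)) when h is continuous. -/
theorem stmt_6 {p : ℕ} (h : ℝ → ℝ) (hdiff : Differentiable ℝ h)
    (hpos : ∀ u, 0 ≤ deriv h u)
    (x : Fin p → ℝ) (y : ℝ) (θ : Fin p → ℝ) (γ : ℝ) (hγ : 0 < γ)
    (C : Matrix (Fin p) (Fin p) ℝ) (hC : C.PosSemidef) :
    Antitone (fun ξ : ℝ => γ * (y - h (x ⬝ᵥ θ + ξ * (x ⬝ᵥ C.mulVec x)))) ∧
    ((∀ u, 0 < deriv h u) → 0 < x ⬝ᵥ C.mulVec x →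
      ∀ ξ₁ ξ₂ : ℝ,
        γ * (y - h (x ⬝ᵥ θ + ξ₁ * (x ⬝ᵥ C.mulVec x))) = ξ₁ →
        γ * (y - h (x ⬝ᵥ θ + ξ₂ * (x ⬝ᵥ C.mulVec x))) = ξ₂ → ξ₁ = ξ₂) ∧
    (Continuous h → ∃ ξ : ℝ,
      γ * (y - h (x ⬝ᵥ θ + ξ * (x ⬝ᵥ C.mulVec x))) = ξ ∧
      ξ ∈ Set.uIcc 0 (γ * (y - h (x ⬝ᵥ θ)))) := by
  set a : ℝ := x ⬝ᵥ C.mulVec x with ha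
  have ha0 : 0 ≤ a := by simpa using hC.dotProduct_mulVec_nonneg x
  have hmono : Monotone h := monotone_of_deriv_nonneg hdiff hpos
  have hanti : Antitone (fun ξ : ℝ => γ * (y - h (x ⬝ᵥ θ + ξ * a))) := by
    intro ξ₁ ξ₂ hle
    have : h (x ⬝ᵥ θ + ξ₁ * a) ≤ h (x ⬝ᵥ θ + ξ₂ * a) := by
      apply hmono; nlinarith
    dsimp only
    nlinarith
  refine ⟨hanti, fun _ _ ξ₁ ξ₂ h1 h2 => ?_, fun hcont => ?_⟩
  · by_contra hne
    rcases lt_or_gt_of_ne hne with hlt | hlt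
    · have := hanti hlt.le; simp only at this; rw [h1, h2] at this
      exact absurd this (not_le.2 hlt)
    · have := hanti hlt.le; simp only at this; rw [h1, h2] at this
      exact absurd this (not_le.2 hlt)
  · set F : ℝ → ℝ := fun ξ => γ * (y - h (x ⬝ᵥ θ + ξ * a)) with hF
    set b : ℝ := γ * (y - h (x ⬝ᵥ θ)) with hb
    have hF0 : F 0 = b := by simp [hF, hb]
    set G : ℝ → ℝ := fun ξ => F ξ - ξ with hG
    have hGcont : Continuous G := by
      apply Continuous.sub _ continuous_id
      exact (continuous_const.mul (continuous_const.sub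
        (hcont.comp (continuous_const.add (continuous_id.mul continuous_const)))))
    have hmem : (0 : ℝ) ∈ Set.uIcc (G 0) (G b) := by
      rcases le_total 0 b with hb0 | hb0
      · have : F b ≤ F 0 := hanti hb0
        have h1 : G b ≤ 0 := by simp only [hG]; rw [hF0] at this; linarith
        have h2 : 0 ≤ G 0 := by simp only [hG, hF0]; linarith
        exact Set.mem_uIcc.2 (Or.inr ⟨h1, h2⟩)
      · have : F 0 ≤ F b := hanti hb0
        have h1 : 0 ≤ G b := by simp only [hG]; rw [hF0] at this; linarith
        have h2 : G 0 ≤ 0 := by simp only [hG, hF0]; linarith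
        exact Set.mem_uIcc.2 (Or.inl ⟨h2, h1⟩)
    obtain ⟨ξ, hξmem, hξ⟩ := intermediate_value_uIcc (hGcont.continuousOn
      (s := Set.uIcc (0 : ℝ) b)) hmem
    refine ⟨ξ, ?_, hξmem⟩
    have h3 : F ξ = ξ := by have : F ξ - ξ = 0 := hξ; linarith
    exact h3
end

section
/- For logistic regression (h(u) = 1/(1+e^{-u})) with binary outcome y ∈ {0,1}, the implicit update fixed-point equation ξ = γ(y − h(x^T θ + ξ‖x‖²)) has a unique solution ξ* for any γ > 0, θ ∈ ℝ^p, and x ≠ 0, and ξ* lies strictly between 0 and γ(y − h(x^T θ)) when y − h(x^T θ) ≠ 0. -/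
open scoped RealInnerProductSpace

lemma logistic_mono : StrictMono (fun u : ℝ => (1 + Real.exp (-u))⁻¹) := by
  intro u v huv
  have h1 : (0:ℝ) < 1 + Real.exp (-v) := by positivity
  have h2 : Real.exp (-v) < Real.exp (-u) := Real.exp_lt_exp.2 (by linarith)
  exact inv_strictAnti₀ h1 (by linarith)

lemma logistic_pos (u : ℝ) : 0 < (1 + Real.exp (-u))⁻¹ := by positivity

lemma logistic_lt_one (u : ℝ) : (1 + Real.exp (-u))⁻¹ < 1 := by
  have := Real.exp_pos (-u)
  rw [inv_lt_one_iff₀]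
  right; linarith

/-- For logistic regression the implicit-update fixed point equation has a
unique solution, which lies strictly between 0 and γ(y − h(xᵀθ)) when the
residual is nonzero. -/
theorem stmt_7 {p : ℕ} (θ x : EuclideanSpace ℝ (Fin p)) (hx : x ≠ 0)
    (y : ℝ) (hy : y = 0 ∨ y = 1) (γ : ℝ) (hγ : 0 < γ) :
    (∃! ξ : ℝ, ξ = γ * (y - (1 + Real.exp (-(⟪x, θ⟫ + ξ * ‖x‖ ^ 2)))⁻¹)) ∧
    (∀ ξ : ℝ, ξ = γ * (y - (1 + Real.exp (-(⟪x, θ⟫ + ξ * ‖x‖ ^ 2)))⁻¹) →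
      y - (1 + Real.exp (-⟪x, θ⟫))⁻¹ ≠ 0 →
      ((0 < ξ ∧ ξ < γ * (y - (1 + Real.exp (-⟪x, θ⟫))⁻¹)) ∨
       (γ * (y - (1 + Real.exp (-⟪x, θ⟫))⁻¹) < ξ ∧ ξ < 0))) := by
  set a : ℝ := ⟪x, θ⟫ with ha
  set b : ℝ := ‖x‖ ^ 2 with hb
  have hbpos : 0 < b := by
    have : ‖x‖ ≠ 0 := norm_ne_zero_iff.2 hx
    positivity
  set g : ℝ → ℝ := fun ξ => ξ - γ * (y - (1 + Real.exp (-(a + ξ * b)))⁻¹) with hg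
  have hy0 : 0 ≤ y := by rcases hy with h | h <;> simp [h]
  have hy1 : y ≤ 1 := by rcases hy with h | h <;> simp [h]
  have hgmono : StrictMono g := by
    intro u v huv
    have h1 : a + u * b < a + v * b := by nlinarith
    have h2 := logistic_mono h1
    simp only [hg]
    have h3 : γ * ((1 + Real.exp (-(a + u * b)))⁻¹) < γ * ((1 + Real.exp (-(a + v * b)))⁻¹) :=
      (mul_lt_mul_iff_right₀ hγ).2 h2
    nlinarith
  have hgcont : Continuous g := by
    have h1 : Continuous fun ξ : ℝ => (1 + Real.exp (-(a + ξ * b))) :=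
      continuous_const.add ((Real.continuous_exp).comp
        (((continuous_const.add ((continuous_id.mul continuous_const)))).neg))
    have h2 : Continuous fun ξ : ℝ => (1 + Real.exp (-(a + ξ * b)))⁻¹ :=
      h1.inv₀ (fun ξ => by positivity)
    exact continuous_id.sub (continuous_const.mul (continuous_const.sub h2))
  -- sign at endpoints
  have hneg : g (-γ) < 0 := by
    have h1 := logistic_lt_one (a + -γ * b)
    have h2 := logistic_pos (a + -γ * b)
    simp only [hg]
    nlinarith
  have hposg : 0 < g γ := by
    have h1 := logistic_lt_one (a + γ * b)
    have h2 := logistic_pos (a + γ * b)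
    simp only [hg]
    nlinarith
  obtain ⟨ξ₀, hξ₀mem, hξ₀⟩ : ∃ ξ ∈ Set.Icc (-γ) γ, g ξ = 0 := by
    have := intermediate_value_Icc (by linarith : (-γ:ℝ) ≤ γ) hgcont.continuousOn
    have h0 : (0:ℝ) ∈ Set.Icc (g (-γ)) (g γ) := ⟨le_of_lt hneg, le_of_lt hposg⟩
    obtain ⟨ξ, hξm, hξe⟩ := this h0
    exact ⟨ξ, hξm, hξe⟩
  constructor
  · refine ⟨ξ₀, ?_, ?_⟩
    · have : ξ₀ - γ * (y - (1 + Real.exp (-(a + ξ₀ * b)))⁻¹) = 0 := hξ₀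
      linarith
    · intro ξ hξ
      have hgξ : g ξ = 0 := by simp only [hg]; linarith [hξ.symm ▸ (rfl : ξ = ξ)]
      exact hgmono.injective (by rw [hgξ, hξ₀])
  · intro ξ hξ hres
    set H := (1 + Real.exp (-a))⁻¹ with hH
    rcases lt_or_gt_of_ne hres with hr | hr
    · -- y - H < 0 : fixed point negative, γ(y-H) < ξ < 0
      right
      have hξneg : ξ < 0 := by
        by_contra hc
        push_neg at hc
        have h1 : a ≤ a + ξ * b := by nlinarith
        have h2 : H ≤ (1 + Real.exp (-(a + ξ * b)))⁻¹ :=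
          logistic_mono.monotone h1
        nlinarith
      have h1 : a + ξ * b < a := by nlinarith
      have h2 : (1 + Real.exp (-(a + ξ * b)))⁻¹ < H := logistic_mono h1
      constructor
      · nlinarith
      · exact hξneg
    · -- y - H > 0
      left
      have hξpos : 0 < ξ := by
        by_contra hc
        push_neg at hc
        have h1 : a + ξ * b ≤ a := by nlinarith
        have h2 : (1 + Real.exp (-(a + ξ * b)))⁻¹ ≤ H :=
          logistic_mono.monotone h1
        nlinarith
      have h1 : a < a + ξ * b := by nlinarith
      have h2 : H < (1 + Real.exp (-(a + ξ * b)))⁻¹ := logistic_mono h1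
      exact ⟨hξpos, by nlinarith⟩
end

section
/- Stability of the implicit update for concave log-likelihood under linear dependence: with ℓ(θ) = g(x^T θ), g differentiable and g' nonincreasing, and implicit update θ_n = θ_{n-1} + γ g'(x^T θ_n) x (γ > 0), the natural parameter moves toward any zero of g': if g'(η⋆) = 0 and η_{n-1} = x^T θ_{n-1}, then |x^T θ_n − η⋆| ≤ |η_{n-1} − η⋆|. -/
open scoped RealInnerProductSpace

/-- Stability of the implicit update: with g concave (deriv g nonincreasing),
the implicit update moves the natural parameter toward any zero of g'. -/
theorem stmt_16 {p : ℕ} (g : ℝ → ℝ) (hg : Differentiable ℝ g)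
    (hanti : Antitone (deriv g)) (γ : ℝ) (hγ : 0 < γ)
    (x θold θnew : EuclideanSpace ℝ (Fin p))
    (him : θnew = θold + (γ * deriv g ⟪x, θnew⟫) • x)
    (ηstar : ℝ) (hstar : deriv g ηstar = 0) :
    |⟪x, θnew⟫ - ηstar| ≤ |⟪x, θold⟫ - ηstar| := by
  have key : ⟪x, θnew⟫ = ⟪x, θold⟫ + (γ * deriv g ⟪x, θnew⟫) * ⟪x, x⟫ := by
    conv_lhs => rw [him]
    simp [inner_add_right, inner_smul_right]
  have ha : (0:ℝ) ≤ γ * ⟪x, x⟫ := mul_nonneg hγ.le real_inner_self_nonneg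
  rcases le_total ηstar ⟪x, θnew⟫ with h | h
  · have hd : deriv g ⟪x, θnew⟫ ≤ 0 := hstar ▸ hanti h
    have h1 : (γ * deriv g ⟪x, θnew⟫) * ⟪x, x⟫ ≤ 0 := by nlinarith
    rw [abs_of_nonneg (by linarith)]
    have : ⟪x, θnew⟫ - ηstar ≤ ⟪x, θold⟫ - ηstar := by linarith
    exact this.trans (le_abs_self _)
  · have hd : 0 ≤ deriv g ⟪x, θnew⟫ := hstar ▸ hanti h
    have h1 : 0 ≤ (γ * deriv g ⟪x, θnew⟫) * ⟪x, x⟫ := by nlinarith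
    rw [abs_of_nonpos (by linarith)]
    have : -(⟪x, θnew⟫ - ηstar) ≤ -(⟪x, θold⟫ - ηstar) := by linarith
    exact this.trans (neg_le_abs _)
end

section
/- For the Poisson GLM (h(u) = e^u) with outcome y ≥ 0, the implicit update fixed-point equation ξ = γ(y − exp(x^T θ + ξ‖x‖²)) has a unique solution for any γ > 0 and x ≠ 0, whereas the explicit update θ^sgd = θ + γ(y − e^{x^T θ})x can produce iterates with exponentially growing gradient magnitude: for any γ > 0 there exist θ, x, y such that |y − h(x^T θ^sgd)| > |y − h(x^T θ)|. -/
open scoped RealInnerProductSpace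

lemma poisson_unique (γ : ℝ) (hγ : 0 < γ) (c a y : ℝ) (ha : 0 < a) (hy : 0 ≤ y) :
    ∃! ξ : ℝ, ξ = γ * (y - Real.exp (c + ξ * a)) := by
  set g : ℝ → ℝ := fun ξ => ξ - γ * (y - Real.exp (c + ξ * a)) with hg
  have hmono : StrictMono g := by
    intro u v huv
    have h1 : Real.exp (c + u * a) ≤ Real.exp (c + v * a) := by
      apply Real.exp_le_exp.2
      nlinarith
    simp only [hg]
    nlinarith
  have hcont : Continuous g := by
    simp only [hg]; continuity
  set ξ₁ : ℝ := -(γ * Real.exp c) with hξ1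
  set ξ₂ : ℝ := γ * y with hξ2
  have h12 : ξ₁ ≤ ξ₂ := by
    have := Real.exp_pos c
    simp only [hξ1, hξ2]; nlinarith
  have hg1 : g ξ₁ ≤ 0 := by
    have h1 : Real.exp (c + ξ₁ * a) ≤ Real.exp c := by
      apply Real.exp_le_exp.2
      have : ξ₁ ≤ 0 := by have := Real.exp_pos c; simp only [hξ1]; nlinarith
      nlinarith
    simp only [hg, hξ1]
    nlinarith
  have hg2 : 0 ≤ g ξ₂ := by
    have := Real.exp_pos (c + ξ₂ * a)
    simp only [hg, hξ2]
    nlinarith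
  have := intermediate_value_Icc h12 hcont.continuousOn
  have h0 : (0:ℝ) ∈ Set.Icc (g ξ₁) (g ξ₂) := ⟨hg1, hg2⟩
  obtain ⟨ξ, _, hξ⟩ := this h0
  refine ⟨ξ, by simp only [hg] at hξ; linarith, ?_⟩
  intro z hz
  apply hmono.injective
  have : g z = 0 := by simp only [hg]; linarith
  rw [this, hξ]

/-- For the Poisson GLM the implicit fixed-point equation has a unique
solution for any γ > 0 and x ≠ 0, whereas the explicit update can strictly
increase the gradient magnitude. -/
theorem stmt_19 {p : ℕ} (hp : 0 < p) (γ : ℝ) (hγ : 0 < γ) :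
    (∀ (θ x : EuclideanSpace ℝ (Fin p)) (y : ℝ), x ≠ 0 → 0 ≤ y →
      ∃! ξ : ℝ, ξ = γ * (y - Real.exp (⟪x, θ⟫ + ξ * ‖x‖ ^ 2))) ∧
    (∃ (θ x : EuclideanSpace ℝ (Fin p)) (y : ℝ), 0 ≤ y ∧
      |y - Real.exp ⟪x, θ + (γ * (y - Real.exp ⟪x, θ⟫)) • x⟫| >
        |y - Real.exp ⟪x, θ⟫|) := by
  constructor
  · intro θ x y hx hy
    exact poisson_unique γ hγ ⟪x, θ⟫ (‖x‖ ^ 2) y (pow_pos (norm_pos_iff.2 hx) 2) hy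
  · have h8 : (0:ℝ) ≤ 8 / γ ^ 2 := by positivity
    refine ⟨0, EuclideanSpace.single ⟨0, hp⟩ 1, 1 + 8 / γ ^ 2, by linarith, ?_⟩
    set x : EuclideanSpace ℝ (Fin p) := EuclideanSpace.single ⟨0, hp⟩ 1 with hx
    set y : ℝ := 1 + 8 / γ ^ 2 with hy
    have hnx : ‖x‖ = 1 := by simp [hx]
    have hi0 : ⟪x, (0 : EuclideanSpace ℝ (Fin p))⟫ = 0 := inner_zero_right x
    have key : ∀ c : ℝ, ⟪x, (0 : EuclideanSpace ℝ (Fin p)) + c • x⟫ = c := by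
      intro c
      rw [inner_add_right, hi0, inner_smul_right, real_inner_self_eq_norm_sq, hnx]
      ring
    rw [hi0, key, Real.exp_zero]
    have hc : γ * (y - 1) = 8 / γ := by
      field_simp [hy]
      have hγ0 : γ ≠ 0 := hγ.ne'
      have h88 : γ ^ 2 * (8 / γ ^ 2) = 8 := by field_simp
      linear_combination γ ^ 2 * hy + h88
    rw [hc]
    have hz : (0:ℝ) < 8 / γ := by positivity
    have hexp : (1 + 4 / γ) ^ 2 ≤ Real.exp (8 / γ) := by
      have h1 : 1 + 4 / γ ≤ Real.exp (4 / γ) := by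
        have := Real.add_one_le_exp (4 / γ); linarith
      have h2 : Real.exp (8 / γ) = Real.exp (4 / γ) ^ 2 := by
        rw [sq, ← Real.exp_add]; ring_nf
      rw [h2]
      have h3 : (0:ℝ) ≤ 1 + 4 / γ := by positivity
      nlinarith [Real.exp_pos (4 / γ)]
    have hgt : Real.exp (8 / γ) > 2 * y - 1 := by
      have h4 : (1 + 4 / γ) ^ 2 = 1 + 8 / γ + 16 / γ ^ 2 := by
        field_simp; ring
      have : 2 * y - 1 = 1 + 16 / γ ^ 2 := by simp [hy]; ring
      rw [this]
      nlinarith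
    have hy1 : (1:ℝ) ≤ y := by rw [hy]; linarith
    clear_value x y
    rw [abs_of_nonpos (by linarith), abs_of_nonneg (by linarith)]
    linarith
end
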